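/- arXiv:1408.6300 — 2 statements merged into one kernel-verified Lean document; each statement's English description precedes it below -/
import Mathlib

section
/- The curves λ ↦ (t(λ), x(λ), z(λ)) given by z(λ) = a√(1-x₀²)√(1-x₀²+a²x₀²)/(a(1-x₀²)λ + √(1-x₀²+a²x₀²)), x(λ) = x₀(a(1-a²)(1-x₀²)λ + √(1-x₀²+a²x₀²))/(a(1-x₀²)λ + √(1-x₀²+a²x₀²)), t(λ) = a²(1-x₀²)√(1-x₀²+a²x₀²)λ/(a(1-x₀²)λ + √(1-x₀²+a²x₀²)) are null curves for the Poincaré AdS₃ metric, i.e. satisfy -t'(λ)² + x'(λ)² + z'(λ)² = 0 for all λ ≥ 0. -/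
/-- The curves `λ ↦ (t(λ), x(λ), z(λ))` of the congruence emanating from the ellipse
`x² + z²/a² = 1, t = 0` in Poincaré AdS₃ (metric `ds² = z⁻²(-dt² + dx² + dz²)`) are null:
`-t'(λ)² + x'(λ)² + z'(λ)² = 0` for all `λ ≥ 0`. -/
theorem congruence_curves_are_null (a x₀ : ℝ) (ha : 0 < a) (hx : |x₀| < 1) :
    (let s : ℝ := Real.sqrt (1 - x₀ ^ 2 + a ^ 2 * x₀ ^ 2)
     let den : ℝ → ℝ := fun l => a * (1 - x₀ ^ 2) * l + s
     let zf : ℝ → ℝ := fun l => a * Real.sqrt (1 - x₀ ^ 2) * s / den l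
     let xf : ℝ → ℝ := fun l => x₀ * (a * (1 - a ^ 2) * (1 - x₀ ^ 2) * l + s) / den l
     let tf : ℝ → ℝ := fun l => a ^ 2 * (1 - x₀ ^ 2) * s * l / den l
     ∀ l : ℝ, 0 ≤ l →
       -(deriv tf l) ^ 2 + (deriv xf l) ^ 2 + (deriv zf l) ^ 2 = 0) := by
  intro s den zf xf tf l hl
  have hx2 : 0 < 1 - x₀ ^ 2 := by nlinarith [sq_abs x₀, abs_nonneg x₀]
  have hs2 : s ^ 2 = 1 - x₀ ^ 2 + a ^ 2 * x₀ ^ 2 :=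
    Real.sq_sqrt (by nlinarith [sq_nonneg (a * x₀)])
  have hs : 0 < s := Real.sqrt_pos.mpr (by nlinarith [sq_nonneg (a * x₀)])
  have hden : 0 < den l := by
    have : 0 ≤ a * (1 - x₀ ^ 2) * l := by positivity
    simpa [den] using add_pos_of_nonneg_of_pos this hs
  have hd : HasDerivAt den (a * (1 - x₀ ^ 2)) l := by
    exact (((hasDerivAt_id l).const_mul (a * (1 - x₀ ^ 2))).add_const s).congr_deriv (mul_one _)
  have hz : HasDerivAt zf
      ((0 * den l - a * Real.sqrt (1 - x₀ ^ 2) * s * (a * (1 - x₀ ^ 2))) / den l ^ 2) l :=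
    (hasDerivAt_const l _).div hd hden.ne'
  have hxn : HasDerivAt (fun l => x₀ * (a * (1 - a ^ 2) * (1 - x₀ ^ 2) * l + s))
      (x₀ * (a * (1 - a ^ 2) * (1 - x₀ ^ 2))) l := by
    simpa using
      (((hasDerivAt_id l).const_mul (a * (1 - a ^ 2) * (1 - x₀ ^ 2))).add_const s).const_mul x₀
  have hxd : HasDerivAt xf
      ((x₀ * (a * (1 - a ^ 2) * (1 - x₀ ^ 2)) * den l -
        x₀ * (a * (1 - a ^ 2) * (1 - x₀ ^ 2) * l + s) * (a * (1 - x₀ ^ 2))) / den l ^ 2) l :=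
    hxn.div hd hden.ne'
  have htn : HasDerivAt (fun l : ℝ => a ^ 2 * (1 - x₀ ^ 2) * s * l)
      (a ^ 2 * (1 - x₀ ^ 2) * s) l := by
    simpa using (hasDerivAt_id l).const_mul (a ^ 2 * (1 - x₀ ^ 2) * s)
  have ht : HasDerivAt tf
      ((a ^ 2 * (1 - x₀ ^ 2) * s * den l -
        a ^ 2 * (1 - x₀ ^ 2) * s * l * (a * (1 - x₀ ^ 2))) / den l ^ 2) l :=
    htn.div hd hden.ne'
  rw [ht.deriv, hxd.deriv, hz.deriv]
  have hq : Real.sqrt (1 - x₀ ^ 2) ^ 2 = 1 - x₀ ^ 2 := Real.sq_sqrt hx2.le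
  have hdl : den l = a * (1 - x₀ ^ 2) * l + s := rfl
  have h4 : (den l ^ 2) ^ 2 ≠ 0 := by positivity
  rw [div_pow, div_pow, div_pow, ← neg_div, ← add_div, ← add_div,
    div_eq_zero_iff]
  left
  rw [hdl]
  linear_combination (a ^ 4 * (1 - x₀ ^ 2) ^ 2 * s ^ 2) * hq -
    (a ^ 4 * (1 - x₀ ^ 2) ^ 2 * s ^ 2) * hs2
end

section
/- For a > 1 and x₀ ∈ (-1,1), the geodesics of the congruence starting at x₀ and at -x₀ intersect at the point x = 0, t = √(1-x₀²+a²x₀²)/a, z = ((a²-1)/a)√(1-x₀²), which is reached at affine parameter λ_× = √(1-x₀²+a²x₀²)/(a(a²-1)(1-x₀²)). -/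
/-- For `a > 1` and `x₀ ∈ (-1,1)`, the null geodesics of the congruence (from the ellipse
`x² + z²/a² = 1, t = 0` in Poincaré AdS₃) starting at `x₀` and at `-x₀` intersect at the
point `x = 0`, `t = √(1-x₀²+a²x₀²)/a`, `z = ((a²-1)/a)√(1-x₀²)`, reached at affine
parameter `λ_× = √(1-x₀²+a²x₀²)/(a(a²-1)(1-x₀²))`. -/
theorem crossover_point (a x₀ : ℝ) (ha : 1 < a) (hx : |x₀| < 1) :
    (let s : ℝ → ℝ := fun y => Real.sqrt (1 - y ^ 2 + a ^ 2 * y ^ 2)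
     let den : ℝ → ℝ → ℝ := fun y l => a * (1 - y ^ 2) * l + s y
     let zf : ℝ → ℝ → ℝ := fun y l => a * Real.sqrt (1 - y ^ 2) * s y / den y l
     let xf : ℝ → ℝ → ℝ := fun y l => y * (a * (1 - a ^ 2) * (1 - y ^ 2) * l + s y) / den y l
     let tf : ℝ → ℝ → ℝ := fun y l => a ^ 2 * (1 - y ^ 2) * s y * l / den y l
     let lx : ℝ := s x₀ / (a * (a ^ 2 - 1) * (1 - x₀ ^ 2))
     xf x₀ lx = 0 ∧ xf (-x₀) lx = 0 ∧
     tf x₀ lx = s x₀ / a ∧ tf (-x₀) lx = s x₀ / a ∧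
     zf x₀ lx = (a ^ 2 - 1) / a * Real.sqrt (1 - x₀ ^ 2) ∧
     zf (-x₀) lx = (a ^ 2 - 1) / a * Real.sqrt (1 - x₀ ^ 2)) := by
  intro s den zf xf tf lx
  have hx2 : x₀ ^ 2 < 1 := by nlinarith [sq_abs x₀, abs_nonneg x₀]
  have hD : 0 < 1 - x₀ ^ 2 := by linarith
  have ha0 : 0 < a := by linarith
  have ha2 : 0 < a ^ 2 - 1 := by nlinarith
  have hSpos : 0 < s x₀ := Real.sqrt_pos.mpr (by nlinarith)
  refine ⟨?_, ?_, ?_, ?_, ?_, ?_⟩ <;>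
    simp only [s, den, zf, xf, tf, lx, neg_sq] at hSpos ⊢ <;>
    rw [div_eq_iff (by positivity)] <;>
    · field_simp
      ring
end
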